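/- Let (R, m, k) be a local noetherian ring and suppose N is a finitely generated R-module such that the local cohomology of N is concentrated in degree 0 and H^0_m(N) ≅ E_R(k) (i.e., RΓ_m(N) ≃ E_R(k) as complexes). Then R is artinian, N is a dualizing module for R (R is Cohen–Macaulay of dimension 0 and N is a canonical module), and in particular N itself is m-torsion with N ≅ E_R(k). -/

import Mathlib

open CategoryTheory

noncomputable section
universe u

/-- `M` is `a`-torsion: every element is annihilated by a power of `a`. -/
def IsAdicTorsion (R : Type u) [CommRing R] (a : Ideal R) (M : Type u)
    [AddCommGroup M] [Module R M] : Prop :=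
  ∀ x : M, ∃ n : ℕ, ∀ r ∈ a ^ n, r • x = 0

/-- `E` is an injective hull of the residue field `k` of a local ring `R`. -/
def IsInjectiveHullOfResidueField (R : Type u) [CommRing R] [IsLocalRing R]
    (E : Type u) [AddCommGroup E] [Module R E] : Prop :=
  Module.Injective R E ∧
  ∃ f : IsLocalRing.ResidueField R →ₗ[R] E, Function.Injective f ∧
    ∀ N : Submodule R E, N ≠ ⊥ → N ⊓ LinearMap.range f ≠ ⊥

open CategoryTheory.Limits localCohomology Opposite IsLocalRing

namespace DualizingAux

variable {R : Type u} [CommRing R]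

/-! ### Identification of `H⁰_J` with a stabilized torsion submodule -/

/-- `linearYoneda` composed with the forgetful functor is the ordinary Yoneda embedding. -/
def lyForgetIso (M : ModuleCat.{u} R) :
    (linearYoneda R (ModuleCat.{u} R)).obj M ⋙ forget (ModuleCat.{u} R) ≅ yoneda.obj M :=
  NatIso.ofComponents (fun X => Iso.refl _) (by intros; rfl)

instance presLimLY (M : ModuleCat.{u} R) (K : Type) [SmallCategory K] :
    PreservesLimitsOfShape K ((linearYoneda R (ModuleCat.{u} R)).obj M) :=
  haveI : PreservesLimitsOfShape K
      ((linearYoneda R (ModuleCat.{u} R)).obj M ⋙ forget (ModuleCat.{u} R)) :=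
    preservesLimitsOfShape_of_natIso (lyForgetIso M).symm
  preservesLimitsOfShape_of_reflects_of_preserves _ (forget (ModuleCat.{u} R))

instance presFinColimFM (M : ModuleCat.{u} R) :
    PreservesFiniteColimits ((linearYoneda R (ModuleCat.{u} R)).obj M).rightOp :=
  ⟨fun _K _ _ => preservesColimitsOfShape_rightOp _ _⟩

/-- `leftOp` of a natural isomorphism of functors into an opposite category. -/
def isoLeftOp {C D : Type*} [Category C] [Category D] {F G : C ⥤ Dᵒᵖ} (α : F ≅ G) :
    F.leftOp ≅ G.leftOp where
  hom := NatTrans.leftOp α.inv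
  inv := NatTrans.leftOp α.hom
  hom_inv_id := by ext X; simp [← unop_comp]
  inv_hom_id := by ext X; simp [← unop_comp]

/-- The explicit diagram `n ↦ Hom_R(R/J^n, M)`. -/
def homDiagram (J : Ideal R) (M : ModuleCat.{u} R) : ℕᵒᵖᵒᵖ ⥤ ModuleCat.{u} R :=
  (ringModIdeals (idealPowersDiagram J)).op ⋙
    ((linearYoneda R (ModuleCat.{u} R)).obj M).rightOp.leftOp

variable (J : Ideal R) (M : ModuleCat.{u} R)

/-- `H⁰_J(M)` is the colimit of the diagram of `Hom_R(R/J^n, M)`. -/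
def locohZeroIso :
    (localCohomology J 0).obj M ≅ colimit (homDiagram J M) := by
  haveI := localCohomology.hasColimitDiagram.{u, 0} (idealPowersDiagram J) 0
  refine ?_ ≪≫ HasColimit.isoOfNatIso (F := diagram (idealPowersDiagram J) 0 ⋙
      (evaluation _ _).obj M) ?_
  · exact colimitObjIsoColimitCompEvaluation _ M
  · exact NatIso.ofComponents (fun n => Iso.refl _) (fun w => by
        simp only [Iso.refl_hom, Category.comp_id, Category.id_comp]) ≪≫
      Functor.isoWhiskerLeft (ringModIdeals (idealPowersDiagram J)).op
        (isoLeftOp ((linearYoneda R (ModuleCat.{u} R)).obj M).rightOp.leftDerivedZeroIsoSelf)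

/-- Retyping of an object of the hom diagram as a plain linear map. -/
def dgHom {n : ℕ} (g : (homDiagram J M).obj (op (op n))) :
    (ModuleCat.of R (R ⧸ (J ^ n : Ideal R))) →ₗ[R] M :=
  (g : ModuleCat.of R (R ⧸ (J ^ n : Ideal R)) ⟶ M).hom

lemma homDiagram_map (k k' : ℕ) (h : k ≤ k') (g : (homDiagram J M).obj (op (op k))) :
    dgHom J M ((homDiagram J M).map ((homOfLE h).op.op) g) =
      (dgHom J M g).comp
        (Submodule.mapQ (J ^ k' : Ideal R) (J ^ k : Ideal R) LinearMap.id
          (Ideal.pow_le_pow_right h)) := rfl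

variable {T : Submodule R M}
variable (hT : ∀ n : ℕ, Submodule.torsionBySet R M ((J ^ n : Ideal R) : Set R) ≤ T)

/-- Evaluation at `1` as a linear map into `T`. -/
def evalOne (n : ℕ) : ((homDiagram J M).obj (op (op n))) →ₗ[R] T where
  toFun g := ⟨dgHom J M g (Submodule.Quotient.mk 1), by
    apply hT n
    rw [Submodule.mem_torsionBySet_iff]
    rintro ⟨r, hr⟩
    have h1 : (r : R) • (Submodule.Quotient.mk 1 : R ⧸ (J ^ n : Ideal R)) = 0 := by
      rw [← Submodule.Quotient.mk_smul, smul_eq_mul, mul_one,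
        Submodule.Quotient.mk_eq_zero]
      exact hr
    rw [← map_smul, h1, map_zero]⟩
  map_add' g g' := by ext; rfl
  map_smul' r g := by ext; rfl

/-- The "standard representative" map into level `c`. -/
def toLevel (c : ℕ) (hTc : T ≤ Submodule.torsionBySet R M ((J ^ c : Ideal R) : Set R)) :
    (T : Type u) →ₗ[R] ((homDiagram J M).obj (op (op c))) where
  toFun x := show (ModuleCat.of R (R ⧸ (J ^ c : Ideal R))) ⟶ M from ModuleCat.ofHom <|
    Submodule.liftQ (J ^ c : Ideal R) (LinearMap.toSpanSingleton R M (x : M))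
      (by
        intro r hr
        simp only [LinearMap.mem_ker, LinearMap.toSpanSingleton_apply]
        exact (Submodule.mem_torsionBySet_iff _ _).mp (hTc x.2) ⟨r, hr⟩)
  map_add' x y := ModuleCat.hom_ext <| Submodule.linearMap_qext _ (LinearMap.ext fun s => by
    show s • ((x : M) + (y : M)) = s • (x : M) + s • (y : M)
    rw [smul_add])
  map_smul' r x := ModuleCat.hom_ext <| Submodule.linearMap_qext _ (LinearMap.ext fun s => by
    show s • (r • (x : M)) = r • (s • (x : M))
    rw [smul_comm])

variable (T)

/-- The cocone on the torsion submodule. -/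
def coconeT : Cocone (homDiagram J M) where
  pt := ModuleCat.of R T
  ι :=
    { app := fun nn => ModuleCat.ofHom (evalOne J M hT (unop (unop nn)))
      naturality := fun nn nn' w => by
        have h : unop (unop nn) ≤ unop (unop nn') := leOfHom w.unop.unop
        obtain rfl : (homOfLE h).op.op = w := Subsingleton.elim _ _
        refine ModuleCat.hom_ext (LinearMap.ext fun g => Subtype.ext ?_)
        show dgHom J M ((homDiagram J M).map (homOfLE h).op.op g)
            (Submodule.Quotient.mk 1) = dgHom J M g (Submodule.Quotient.mk 1)
        rw [homDiagram_map]
        show dgHom J M g (Submodule.mapQ _ _ LinearMap.id _ (Submodule.Quotient.mk 1)) = _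
        rw [Submodule.mapQ_apply]
        rfl }

variable (c : ℕ) (hTc : T ≤ Submodule.torsionBySet R M ((J ^ c : Ideal R) : Set R))

/-- The colimit of the hom diagram is the stabilized torsion submodule. -/
def colimIsoT : colimit (homDiagram J M) ≅ ModuleCat.of R T where
  hom := colimit.desc _ (coconeT J M T hT)
  inv := (show ModuleCat.of R T ⟶ (homDiagram J M).obj (op (op c)) from
      ModuleCat.ofHom (toLevel J M c hTc)) ≫ colimit.ι (homDiagram J M) (op (op c))
  hom_inv_id := by
    refine colimit.hom_ext fun nn => ?_
    obtain ⟨⟨n⟩⟩ := nn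
    erw [colimit.ι_desc_assoc, Category.comp_id]
    show (ModuleCat.ofHom (evalOne J M hT n) ≫ (show ModuleCat.of R T ⟶ _ from ModuleCat.ofHom (toLevel J M c hTc))) ≫
        colimit.ι (homDiagram J M) (op (op c)) = colimit.ι (homDiagram J M) (op (op n))
    have h1 : colimit.ι (homDiagram J M) (op (op c)) =
        (homDiagram J M).map ((homOfLE (le_max_right n c)).op.op) ≫
          colimit.ι (homDiagram J M) (op (op (max n c))) := (colimit.w _ _).symm
    have h2 : colimit.ι (homDiagram J M) (op (op n)) =
        (homDiagram J M).map ((homOfLE (le_max_left n c)).op.op) ≫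
          colimit.ι (homDiagram J M) (op (op (max n c))) := (colimit.w _ _).symm
    rw [h1, h2, ← Category.assoc]
    congr 1
    refine ModuleCat.hom_ext (LinearMap.ext fun g => ?_)
    refine ModuleCat.hom_ext (Submodule.linearMap_qext _ (LinearMap.ext fun s => ?_))
    show s • (dgHom J M g (Submodule.Quotient.mk 1)) = _
    show _ = dgHom J M ((homDiagram J M).map ((homOfLE (le_max_left n c)).op.op) g)
        (Submodule.Quotient.mk s)
    rw [homDiagram_map]
    show _ = dgHom J M g (Submodule.mapQ _ _ LinearMap.id _ (Submodule.Quotient.mk s))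
    rw [Submodule.mapQ_apply]
    show _ = dgHom J M g (Submodule.Quotient.mk s)
    have h3 : (Submodule.Quotient.mk s : R ⧸ (J ^ n : Ideal R)) =
        s • Submodule.Quotient.mk 1 := by
      rw [← Submodule.Quotient.mk_smul, smul_eq_mul, mul_one]
    rw [h3, map_smul]
  inv_hom_id := by
    erw [Category.assoc, colimit.ι_desc]
    refine ModuleCat.hom_ext (LinearMap.ext fun (x : T) => Subtype.ext ?_)
    show dgHom J M (toLevel J M c hTc x) (Submodule.Quotient.mk 1) = ((x : T) : M)
    show (1 : R) • ((x : T) : M) = ((x : T) : M)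
    rw [one_smul]

/-! ### Artinian ring lemmas -/

variable [IsLocalRing R]

/-- A finite module over a local ring killed by the maximal ideal is Artinian. -/
lemma artinian_of_max_torsion (M : Type u) [AddCommGroup M] [Module R M] [Module.Finite R M]
    (h : ∀ r ∈ maximalIdeal R, ∀ x : M, r • x = 0) : IsArtinian R M := by
  have hT : Module.IsTorsionBySet R M ((maximalIdeal R : Ideal R) : Set R) :=
    fun x r => h r.1 r.2 x
  letI : Module (R ⧸ maximalIdeal R) M := hT.module
  haveI : IsScalarTower R (R ⧸ maximalIdeal R) M := hT.isScalarTower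
  haveI : Module.Finite (R ⧸ maximalIdeal R) M :=
    Module.Finite.of_restrictScalars_finite R _ _
  letI : Field (R ⧸ maximalIdeal R) := Ideal.Quotient.field _
  haveI : IsArtinian (R ⧸ maximalIdeal R) M := inferInstance
  let e : Submodule R M ↪o Submodule (R ⧸ maximalIdeal R) M :=
    { toFun := fun p =>
        { carrier := p
          add_mem' := fun ha hb => p.add_mem ha hb
          zero_mem' := p.zero_mem
          smul_mem' := by
            intro cbar x hx
            obtain ⟨cc, rfl⟩ := Submodule.Quotient.mk_surjective _ cbar
            show ((Ideal.Quotient.mk (maximalIdeal R)) cc) • x ∈ p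
            rw [hT.mk_smul]
            exact p.smul_mem cc hx }
      inj' := fun p q hpq => by
        ext x
        exact ⟨fun hx => by exact (congrArg (x ∈ ·) (congrArg SetLike.coe hpq)).mp hx,
          fun hx => by exact (congrArg (x ∈ ·) (congrArg SetLike.coe hpq)).mpr hx⟩
      map_rel_iff' := Iff.rfl }
  exact (isArtinian_iff R M).mpr (e.ltEmbedding.wellFounded IsWellFounded.wf)

/-- A finite module killed by a power of the maximal ideal of a noetherian local ring is
Artinian. -/
lemma artinian_of_pow_torsion [IsNoetherianRing R] :
    ∀ (c : ℕ) (M : Type u) [AddCommGroup M] [Module R M] [Module.Finite R M],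
      (∀ r ∈ (maximalIdeal R) ^ c, ∀ x : M, r • x = 0) → IsArtinian R M := by
  intro c
  induction c with
  | zero =>
    intro M _ _ _ h
    haveI : Subsingleton M := by
      constructor
      intro a b
      have ha := h 1 (by simp) a
      have hb := h 1 (by simp) b
      rw [one_smul] at ha hb
      rw [ha, hb]
    infer_instance
  | succ c ih =>
    intro M _ _ _ h
    haveI : IsNoetherian R M := inferInstance
    let S : Submodule R M := (maximalIdeal R) ^ c • ⊤
    haveI : Module.Finite R S := Module.Finite.iff_fg.mpr (IsNoetherian.noetherian S)
    haveI : Module.Finite R (M ⧸ S) := inferInstance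
    have hS1 : IsArtinian R S := by
      apply artinian_of_max_torsion
      intro r hr x
      apply Subtype.ext
      show r • (x : M) = 0
      refine Submodule.smul_induction_on x.2 ?_ ?_
      · intro a ha n _
        have hm : r * a ∈ maximalIdeal R ^ (c + 1) := by
          rw [pow_succ']
          exact Ideal.mul_mem_mul hr ha
        rw [smul_smul]
        exact h _ hm n
      · intro y z hy hz
        rw [smul_add, hy, hz, add_zero]
    have hQ : IsArtinian R (M ⧸ S) := by
      apply ih
      intro r hr z
      obtain ⟨x, rfl⟩ := Submodule.Quotient.mk_surjective S z
      rw [← Submodule.Quotient.mk_smul, Submodule.Quotient.mk_eq_zero]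
      exact Submodule.smul_mem_smul hr Submodule.mem_top
    exact isArtinian_of_range_eq_ker S.subtype S.mkQ
      (by rw [Submodule.range_subtype, Submodule.ker_mkQ])

/-- If a power of the maximal ideal kills the injective hull of the residue field, then that
power of the maximal ideal is zero. -/
lemma pow_eq_bot_of_kills_injectiveHull (E : Type u) [AddCommGroup E] [Module R E]
    (hE : IsInjectiveHullOfResidueField R E) (c : ℕ)
    (h : ∀ r ∈ (maximalIdeal R) ^ c, ∀ y : E, r • y = 0) :
    (maximalIdeal R) ^ c = ⊥ := by
  obtain ⟨hInj, f, hfinj, -⟩ := hE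
  refine (Submodule.eq_bot_iff _).mpr fun r hr => ?_
  by_contra hr0
  have hann : Ideal.torsionOf R R r ≤ maximalIdeal R := by
    apply IsLocalRing.le_maximalIdeal
    intro htop
    have h1 : (1 : R) ∈ Ideal.torsionOf R R r := htop ▸ Submodule.mem_top
    rw [Ideal.mem_torsionOf_iff, one_smul] at h1
    exact hr0 h1
  have hone : (1 : ResidueField R) = Submodule.Quotient.mk 1 := rfl
  set q : R →ₗ[R] E := LinearMap.toSpanSingleton R E (f 1) with hq
  have hker : Ideal.torsionOf R R r ≤ LinearMap.ker q := by
    intro s hs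
    have hsm : s • (1 : ResidueField R) = 0 := by
      rw [Algebra.smul_def, mul_one]
      exact Ideal.Quotient.eq_zero_iff_mem.mpr (hann hs)
    simp only [LinearMap.mem_ker, hq, LinearMap.toSpanSingleton_apply]
    rw [← map_smul, hsm, map_zero]
  set q' : (R ⧸ Ideal.torsionOf R R r) →ₗ[R] E := Submodule.liftQ _ q hker with hq'
  set α : (R ∙ r) →ₗ[R] E :=
    q' ∘ₗ (Ideal.quotTorsionOfEquivSpanSingleton R R r).symm.toLinearMap with hα
  obtain ⟨g, hg⟩ := hInj.out (Submodule.subtype (R ∙ r)) Subtype.val_injective α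
  have hrr : r ∈ (R ∙ r) := Submodule.mem_span_singleton_self r
  have e1 : (Ideal.quotTorsionOfEquivSpanSingleton R R r).symm
      (⟨r, Submodule.mem_span_singleton_self r⟩ : R ∙ r) = Submodule.Quotient.mk 1 := by
    rw [LinearEquiv.symm_apply_eq, Ideal.quotTorsionOfEquivSpanSingleton_apply_mk, one_smul]
  have key : g r = f 1 := by
    have h2 := hg ⟨r, hrr⟩
    have hsub : (Submodule.subtype (R ∙ r)) ⟨r, hrr⟩ = r := rfl
    rw [hsub] at h2
    rw [h2, hα]
    simp only [LinearMap.comp_apply, LinearEquiv.coe_coe]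
    rw [e1, hq', Submodule.liftQ_apply, hq, LinearMap.toSpanSingleton_apply, one_smul]
  have hzero : r • g 1 = 0 := h r hr (g 1)
  rw [← map_smul, smul_eq_mul, mul_one, key] at hzero
  exact one_ne_zero (hfinj (by rw [hzero, map_zero]))

end DualizingAux

/-- Let `(R, m, k)` be a local noetherian ring, `E = E_R(k)`, and `N` a finitely generated
`R`-module with `H^0_m(N) ≅ E` and `H^i_m(N) = 0` for `i > 0` (i.e. `RΓ_m(N) ≃ E`).  Then `R`
is artinian, `N` is `m`-torsion, and `N ≅ E_R(k)` (so `N` is a dualizing module for the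
zero-dimensional Cohen–Macaulay ring `R`). -/
theorem dualizing_of_localCohomology_eq_injectiveHull
    (R : Type u) [CommRing R] [IsLocalRing R] [IsNoetherianRing R]
    (E : Type u) [AddCommGroup E] [Module R E]
    (hE : IsInjectiveHullOfResidueField R E)
    (N : Type u) [AddCommGroup N] [Module R N] [Module.Finite R N]
    (h0 : Nonempty
      (((localCohomology (IsLocalRing.maximalIdeal R) 0).obj (ModuleCat.of R N)) ≃ₗ[R] E))
    (hpos : ∀ i : ℕ, 0 < i →
      Subsingleton ((localCohomology (IsLocalRing.maximalIdeal R) i).obj (ModuleCat.of R N))) :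
    IsArtinianRing R ∧ IsAdicTorsion R (IsLocalRing.maximalIdeal R) N ∧
    Nonempty (N ≃ₗ[R] E) := by
  classical
  set J : Ideal R := IsLocalRing.maximalIdeal R with hJ
  set M : ModuleCat.{u} R := ModuleCat.of R N with hM
  haveI : IsNoetherian R N := inferInstance
  haveI : IsNoetherian R (M : Type u) := inferInstanceAs (IsNoetherian R N)
  -- the increasing chain of torsion submodules stabilizes
  let Tchain : ℕ →o Submodule R M :=
    ⟨fun n => Submodule.torsionBySet R M ((J ^ n : Ideal R) : Set R), by
      intro a b hab
      exact Submodule.torsionBySet_le_torsionBySet_of_subset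
        (SetLike.coe_subset_coe.mpr (Ideal.pow_le_pow_right hab))⟩
  obtain ⟨c, hstab⟩ := monotone_stabilizes_iff_noetherian.mpr inferInstance Tchain
  set T : Submodule R M := Tchain c with hTdef
  have hT : ∀ n : ℕ, Submodule.torsionBySet R M ((J ^ n : Ideal R) : Set R) ≤ T := by
    intro n
    rcases le_total n c with h | h
    · exact Tchain.monotone h
    · exact (hstab n h).ge
  have hTc : T ≤ Submodule.torsionBySet R M ((J ^ c : Ideal R) : Set R) := le_rfl
  -- identify local cohomology in degree 0 with `T`
  have eNT : (((localCohomology J 0).obj M : Type u)) ≃ₗ[R] T :=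
    (DualizingAux.locohZeroIso J M ≪≫
      DualizingAux.colimIsoT J M T hT c hTc).toLinearEquiv
  have ε : E ≃ₗ[R] T := h0.some.symm.trans eNT
  -- `J ^ c` kills `E`, hence it is zero
  have hkill : ∀ r ∈ J ^ c, ∀ y : E, r • y = 0 := by
    intro r hr y
    have h1 : r • ((ε y : T) : M) = 0 :=
      (Submodule.mem_torsionBySet_iff _ _).mp (ε y).2 ⟨r, hr⟩
    have h2 : r • ε y = 0 := Subtype.ext h1
    calc r • y = r • ε.symm (ε y) := by rw [ε.symm_apply_apply]
    _ = ε.symm (r • ε y) := (map_smul ε.symm r (ε y)).symm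
    _ = 0 := by rw [h2, map_zero]
  have hbot : J ^ c = ⊥ := DualizingAux.pow_eq_bot_of_kills_injectiveHull E hE c hkill
  have hzero : ∀ r ∈ J ^ c, (r : R) = 0 := fun r hr => (Submodule.mem_bot R).mp (hbot ▸ hr)
  -- conclusions
  have hart : IsArtinianRing R := by
    apply DualizingAux.artinian_of_pow_torsion c R
    intro r hr x
    rw [hzero r hr, zero_smul]
  have htor : IsAdicTorsion R J N := by
    intro x
    exact ⟨c, fun r hr => by rw [hzero r hr, zero_smul]⟩
  have htop : T = ⊤ := by
    rw [eq_top_iff]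
    intro x _
    rw [hTdef]
    show x ∈ Submodule.torsionBySet R M ((J ^ c : Ideal R) : Set R)
    rw [Submodule.mem_torsionBySet_iff]
    rintro ⟨r, hr⟩
    show r • x = 0
    rw [hzero r hr, zero_smul]
  refine ⟨hart, htor, ⟨?_⟩⟩
  exact (LinearEquiv.ofTop T htop).symm.trans ε.symm

end
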